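/- For ν ≥ 1, the function ρ(ℓ) = e^(-ℓ)·(1/Σ(ν+1,ν+1))·Σ_{i=1}^{ν+1} Σ(ν-i+2, ν+1)·ℓ^(i-1)/(i-1)!, with Σ(i,j) = C(i+j-2, i-1)/2^(i+j-1), satisfies ρ(0) = 1 and ρ'(0) = 0. -/

import Mathlib

noncomputable def Sig (i j : ℕ) : ℝ :=
  (Nat.choose (i + j - 2) (i - 1) : ℝ) / 2 ^ (i + j - 1)

noncomputable def ρ (ν : ℕ) (ℓ : ℝ) : ℝ :=
  Real.exp (-ℓ) * (1 / Sig (ν + 1) (ν + 1)) *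
    ∑ i ∈ Finset.Icc 1 (ν + 1),
      Sig (ν + 2 - i) (ν + 1) * ℓ ^ (i - 1) / (Nat.factorial (i - 1) : ℝ)

lemma Sig_pos (i j : ℕ) (h : 2 ≤ i + j) (hi : 1 ≤ i) (hij : i ≤ i + j - 1) :
    0 < Sig i j := by
  unfold Sig
  apply div_pos
  · exact_mod_cast Nat.choose_pos (by omega)
  · positivity

lemma rho_eq (ν : ℕ) : ρ ν = fun ℓ => Real.exp (-ℓ) * (1 / Sig (ν + 1) (ν + 1)) *
    ∑ k ∈ Finset.range (ν + 1), Sig (ν + 1 - k) (ν + 1) * ℓ ^ k / (Nat.factorial k : ℝ) := by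
  funext ℓ
  unfold ρ
  congr 1
  rw [← Finset.Ico_add_one_right_eq_Icc, Finset.sum_Ico_eq_sum_range]
  apply Finset.sum_congr (by norm_num)
  intro k _
  have h1 : ν + 2 - (1 + k) = ν + 1 - k := by omega
  have h2 : 1 + k - 1 = k := by omega
  rw [h1, h2]

theorem stmt_9 (ν : ℕ) (hν : 1 ≤ ν) :
    ρ ν 0 = 1 ∧ deriv (ρ ν) 0 = 0 := by
  obtain ⟨m, rfl⟩ : ∃ m, ν = m + 1 := ⟨ν - 1, by omega⟩
  set n := m + 1 with hn
  have hb0 : (0:ℝ) < Sig (n + 1) (n + 1) := Sig_pos _ _ (by omega) (by omega) (by omega)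
  have hkey : Sig n (n + 1) = Sig (n + 1) (n + 1) := by
    unfold Sig
    have h1 : n + (n + 1) - 2 = 2 * m + 1 := by omega
    have h2 : n - 1 = m := by omega
    have h3 : n + 1 + (n + 1) - 2 = 2 * m + 2 := by omega
    have h4 : n + 1 - 1 = m + 1 := by omega
    have h5 : n + (n + 1) - 1 = 2 * m + 2 := by omega
    have h6 : n + 1 + (n + 1) - 1 = 2 * m + 3 := by omega
    rw [h1, h2, h3, h4, h5, h6]
    have hch : (2 * m + 2).choose (m + 1) = 2 * (2 * m + 1).choose m := by
      have := Nat.succ_sub_one (2 * m + 1)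
      have hpas : (2 * m + 2).choose (m + 1)
          = (2 * m + 1).choose m + (2 * m + 1).choose (m + 1) :=
        Nat.choose_succ_succ (2 * m + 1) m
      have hsym : (2 * m + 1).choose (m + 1) = (2 * m + 1).choose m := by
        rw [← Nat.choose_symm (by omega : m + 1 ≤ 2 * m + 1)]
        congr 1; omega
      omega
    rw [hch]
    push_cast
    ring
  -- sum as function of ℓ
  set b : ℕ → ℝ := fun k => Sig (n + 1 - k) (n + 1) with hb
  have hb0' : b 0 = Sig (n + 1) (n + 1) := by simp [hb]
  have hb1 : b 1 = Sig (n + 1) (n + 1) := by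
    simp only [hb]
    simpa using hkey
  set g : ℝ → ℝ := fun ℓ => ∑ k ∈ Finset.range (n + 1), b k * ℓ ^ k / (Nat.factorial k : ℝ)
    with hg
  have hρ : ρ (m + 1) = fun ℓ => Real.exp (-ℓ) * (1 / Sig (n + 1) (n + 1)) * g ℓ :=
    rho_eq (m + 1)
  have hg0 : g 0 = Sig (n + 1) (n + 1) := by
    show ∑ k ∈ Finset.range (n + 1), b k * (0:ℝ) ^ k / (Nat.factorial k : ℝ)
        = Sig (n + 1) (n + 1)
    rw [Finset.sum_eq_single 0]
    · simpa using hb0'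
    · intro k _ hk
      simp [zero_pow hk]
    · simp
  have hval : ρ (m + 1) 0 = 1 := by
    rw [hρ]
    simp only
    rw [hg0]
    field_simp
    simp
  refine ⟨hval, ?_⟩
  -- derivative of g at 0 is b 1
  have hgd : HasDerivAt g (b 1) 0 := by
    have h : HasDerivAt g
        (∑ k ∈ Finset.range (n + 1), b k * (k * (0:ℝ) ^ (k - 1)) / (Nat.factorial k : ℝ)) 0 := by
      apply HasDerivAt.fun_sum
      intro k _
      exact ((hasDerivAt_pow k (0:ℝ)).const_mul (b k)).div_const _
    convert h using 1
    rw [Finset.sum_eq_single 1]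
    · simp
    · intro k _ hk
      rcases Nat.eq_zero_or_pos k with rfl | hkpos
      · simp
      · have : k - 1 ≠ 0 := by omega
        simp [zero_pow this]
    · intro h1; exact absurd (Finset.mem_range.2 (by omega)) h1
  have hexp : HasDerivAt (fun ℓ : ℝ => Real.exp (-ℓ)) (-1) 0 := by
    have h := (Real.hasDerivAt_exp (-(0:ℝ))).comp 0 (hasDerivAt_neg 0)
    simpa [Function.comp_def] using h
  have hc : HasDerivAt (fun ℓ : ℝ => Real.exp (-ℓ) * (1 / Sig (n + 1) (n + 1)))
      (-(1 / Sig (n + 1) (n + 1))) 0 := by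
    simpa using hexp.mul_const (1 / Sig (n + 1) (n + 1))
  have hD : HasDerivAt (ρ (m + 1))
      ((-(1 / Sig (n + 1) (n + 1))) * g 0
        + (Real.exp (-0) * (1 / Sig (n + 1) (n + 1))) * b 1) 0 := by
    rw [hρ]
    exact hc.mul hgd
  rw [hD.deriv, hg0, hb1]
  have : Sig (n + 1) (n + 1) ≠ 0 := ne_of_gt hb0
  field_simp
  simp
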